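/- (Weak greedy algorithm: if the errors converge, they converge to zero.) In the weak greedy setting, suppose in addition that the linear span of S is dense in X, that for each m ≥ 1 there is a best approximation w_m of f_{m−1} in S, and that Σ_{m≥1} μ_m² = ∞. If the sequence (f_m)_{m≥1} converges in X, then its limit is 0. -/

import Mathlib

open scoped RealInnerProductSpace Topology

/-- Weak greedy algorithm: if the span of `S` is dense, best approximations in `S` exist,
and `Σ μ_m² = ∞` (i.e. `(μ_m²)` is not summable), then any limit of the error sequence
`(f_m)` must be zero. -/
theorem weak_greedy_limit_zero {X : Type*}
    [NormedAddCommGroup X] [InnerProductSpace ℝ X] [CompleteSpace X]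
    (S : Set X) (hS : S.Nonempty) (hScone : ∀ (c : ℝ), ∀ v ∈ S, c • v ∈ S)
    (hdense : Dense (Submodule.span ℝ S : Set X))
    (u : X) (wt : ℕ → X) (hwtS : ∀ m : ℕ, wt (m + 1) ∈ S)
    (ut : ℕ → X) (hut0 : ut 0 = 0) (hutrec : ∀ m : ℕ, ut (m + 1) = ut m + wt (m + 1))
    (f : ℕ → X) (hf : ∀ m : ℕ, f m = u - ut m)
    (γ : ℕ → ℝ) (hγ : ∀ m : ℕ, 0 ≤ γ (m + 1))
    (hquasi : ∀ m : ℕ, ‖f m - wt (m + 1)‖ ≤ (1 + γ (m + 1)) * Metric.infDist (f m) S)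
    (hfpos : ∀ m : ℕ, 0 < ‖f m‖)
    (α : ℕ → ℝ) (hα : ∀ m : ℕ, α (m + 1) = Metric.infDist (f m) S / ‖f m‖)
    (hcond : ∀ m : ℕ, (1 + γ (m + 1)) * α (m + 1) < 1)
    (μ : ℕ → ℝ)
    (hμ : ∀ m : ℕ, μ (m + 1) =
      Real.sqrt ((1 - (1 + γ (m + 1)) ^ 2 * α (m + 1) ^ 2) / (1 - α (m + 1) ^ 2)))
    (w : ℕ → X)
    (hw : ∀ m : ℕ, w (m + 1) ∈ S ∧ ‖f m - w (m + 1)‖ = Metric.infDist (f m) S)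
    (hμsum : ¬ Summable (fun m : ℕ => μ (m + 1) ^ 2)) :
    ∀ L : X, Filter.Tendsto f Filter.atTop (𝓝 L) → L = 0 := by
  intro L hL
  by_contra hL0
  -- find s ∈ S with ⟪L, s⟫ ≠ 0
  have hex : ∃ s ∈ S, ⟪L, s⟫ ≠ 0 := by
    by_contra h
    push_neg at h
    refine hL0 (hdense.eq_zero_of_inner_left ℝ fun v hv => ?_)
    refine Submodule.span_induction (fun x hx => h x hx) (by simp) ?_ ?_ hv
    · intro x y _ _ hx hy
      rw [inner_add_right, hx, hy, add_zero]
    · intro c x _ hx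
      rw [real_inner_smul_right, hx, mul_zero]
  obtain ⟨s₀, hs₀S, hs₀⟩ := hex
  have hs₀ne : s₀ ≠ 0 := fun h => hs₀ (by simp [h])
  -- normalize
  set s : X := ‖s₀‖⁻¹ • s₀ with hs_def
  have hsS : s ∈ S := hScone _ _ hs₀S
  have hsnorm : ‖s‖ = 1 := by
    rw [hs_def, norm_smul, norm_inv, norm_norm, inv_mul_cancel₀ (norm_ne_zero_iff.2 hs₀ne)]
  have hsinner : ⟪L, s⟫ ≠ 0 := by
    rw [hs_def, real_inner_smul_right]
    exact mul_ne_zero (inv_ne_zero (norm_ne_zero_iff.2 hs₀ne)) hs₀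
  -- eventual lower bound on ⟪f m, s⟫²
  set c : ℝ := ⟪L, s⟫ ^ 2 / 2 with hc_def
  have hcpos : 0 < c := by positivity
  have htend : Filter.Tendsto (fun m => ⟪f m, s⟫ ^ 2) Filter.atTop (𝓝 (⟪L, s⟫ ^ 2)) := by
    have : Continuous fun x : X => ⟪x, s⟫ ^ 2 :=
      ((continuous_id.inner continuous_const)).pow 2
    exact (this.tendsto L).comp hL
  have hev : ∀ᶠ m in Filter.atTop, c ≤ ⟪f m, s⟫ ^ 2 := by
    have hx : 0 < ⟪L, s⟫ ^ 2 := by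
      rw [← sq_abs]; exact pow_pos (abs_pos.2 hsinner) 2
    have : Set.Ioi c ∈ 𝓝 (⟪L, s⟫ ^ 2) := Ioi_mem_nhds (by rw [hc_def]; linarith)
    exact (htend.eventually_mem this).mono fun m hm => le_of_lt hm
  obtain ⟨N, hN⟩ := Filter.eventually_atTop.1 hev
  -- basic step facts
  have hfrec : ∀ m : ℕ, f (m + 1) = f m - wt (m + 1) := by
    intro m
    rw [hf, hf, hutrec]
    abel
  -- key inequality
  have key : ∀ m : ℕ, μ (m + 1) ^ 2 * ⟪f m, s⟫ ^ 2 ≤ ‖f m‖ ^ 2 - ‖f (m + 1)‖ ^ 2 := by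
    intro m
    set d : ℝ := Metric.infDist (f m) S with hd_def
    have hd0 : 0 ≤ d := Metric.infDist_nonneg
    have hfm := hfpos m
    have hα0 : 0 ≤ α (m + 1) := by rw [hα]; exact div_nonneg hd0 hfm.le
    have hγ1 : (1 : ℝ) ≤ 1 + γ (m + 1) := by linarith [hγ m]
    have hα1 : α (m + 1) < 1 := by nlinarith [hcond m]
    have hαd : d = α (m + 1) * ‖f m‖ := by
      rw [hα]; field_simp; exact hd_def
    -- inner bound
    have h1 : ⟪f m, s⟫ ^ 2 ≤ ‖f m‖ ^ 2 - d ^ 2 := by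
      have hmem : (⟪f m, s⟫ : ℝ) • s ∈ S := hScone _ _ hsS
      have hle : d ≤ ‖f m - ⟪f m, s⟫ • s‖ := by
        rw [hd_def, ← dist_eq_norm]
        exact Metric.infDist_le_dist_of_mem hmem
      have hnorm : ‖f m - ⟪f m, s⟫ • s‖ ^ 2 = ‖f m‖ ^ 2 - ⟪f m, s⟫ ^ 2 := by
        rw [norm_sub_sq_real, real_inner_smul_right, norm_smul]
        simp [hsnorm, Real.norm_eq_abs, mul_pow, sq_abs]
        ring
      nlinarith [hle, hnorm, hd0, norm_nonneg (f m - ⟪f m, s⟫ • s)]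
    -- error decrease
    have h2 : ‖f (m + 1)‖ ≤ (1 + γ (m + 1)) * d := by
      rw [hfrec m]; exact hquasi m
    have h2' : ‖f (m + 1)‖ ^ 2 ≤ (1 + γ (m + 1)) ^ 2 * α (m + 1) ^ 2 * ‖f m‖ ^ 2 := by
      have : ‖f (m + 1)‖ ^ 2 ≤ ((1 + γ (m + 1)) * d) ^ 2 := by
        nlinarith [norm_nonneg (f (m + 1)), h2]
      calc ‖f (m + 1)‖ ^ 2 ≤ ((1 + γ (m + 1)) * d) ^ 2 := this
        _ = (1 + γ (m + 1)) ^ 2 * α (m + 1) ^ 2 * ‖f m‖ ^ 2 := by rw [hαd]; ring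
    -- μ² value
    have hnum : 0 ≤ 1 - (1 + γ (m + 1)) ^ 2 * α (m + 1) ^ 2 := by
      nlinarith [hcond m, mul_nonneg (le_trans zero_le_one hγ1) hα0]
    have hden : 0 < 1 - α (m + 1) ^ 2 := by nlinarith
    have hμsq : μ (m + 1) ^ 2 =
        (1 - (1 + γ (m + 1)) ^ 2 * α (m + 1) ^ 2) / (1 - α (m + 1) ^ 2) := by
      rw [hμ, Real.sq_sqrt (div_nonneg hnum hden.le)]
    have hμ0 : 0 ≤ μ (m + 1) ^ 2 := sq_nonneg _
    have heq : μ (m + 1) ^ 2 * (‖f m‖ ^ 2 - d ^ 2) =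
        (1 - (1 + γ (m + 1)) ^ 2 * α (m + 1) ^ 2) * ‖f m‖ ^ 2 := by
      rw [hμsq, hαd]
      field_simp
    nlinarith [mul_le_mul_of_nonneg_left h1 hμ0]
  -- monotonicity of ‖f m‖²
  set a : ℕ → ℝ := fun m => ‖f m‖ ^ 2 with ha_def
  have hmono : ∀ m : ℕ, a (m + 1) ≤ a m := by
    intro m
    have h1 := key m
    have h4 : 0 ≤ μ (m + 1) ^ 2 * ⟪f m, s⟫ ^ 2 :=
      mul_nonneg (sq_nonneg _) (sq_nonneg _)
    simp only [ha_def]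
    linarith
  -- telescoping sum is summable
  have htele : Summable (fun m : ℕ => a m - a (m + 1)) := by
    apply summable_of_sum_range_le (c := a 0)
    · intro n; linarith [hmono n]
    · intro n
      rw [Finset.sum_range_sub' a n]
      have : 0 ≤ a n := sq_nonneg _
      linarith
  have htele' : Summable (fun m : ℕ => (1 / c) * (a (m + N) - a (m + N + 1))) :=
    (((summable_nat_add_iff N).2 htele)).mul_left _
  have hsummu : Summable (fun m : ℕ => μ (m + N + 1) ^ 2) := by
    refine htele'.of_nonneg_of_le (fun m => sq_nonneg _) fun m => ?_
    have hkey := key (m + N)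
    have hc : c ≤ ⟪f (m + N), s⟫ ^ 2 := hN (m + N) (Nat.le_add_left N m)
    have h3 : c * μ (m + N + 1) ^ 2 ≤ μ (m + N + 1) ^ 2 * ⟪f (m + N), s⟫ ^ 2 := by
      nlinarith [sq_nonneg (μ (m + N + 1))]
    have hgoal : c * μ (m + N + 1) ^ 2 ≤ a (m + N) - a (m + N + 1) := by
      simp only [ha_def]; linarith
    calc μ (m + N + 1) ^ 2 = (1 / c) * (c * μ (m + N + 1) ^ 2) := by field_simp
      _ ≤ (1 / c) * (a (m + N) - a (m + N + 1)) :=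
        mul_le_mul_of_nonneg_left hgoal (by positivity)
  exact hμsum ((summable_nat_add_iff N).1 hsummu)
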